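/- Let γ > 0 and let L = {(t, γt) : t ∈ ℝ} be the line through the origin of slope γ. Then the one-dimensional Lebesgue measure of {t ∈ ℝ : (t, γt) ∈ Gₙ} tends to 0 as n → ∞; consequently the one-dimensional Lebesgue measure of {t ∈ ℝ : (t, γt) ∈ G} equals 0, where G is the Sierpinski gasket. -/

import Mathlib

open MeasureTheory Filter

/-- The closed triangle `E` with vertices `(0,0)`, `(1,0)`, `(0,1)`. -/
def E : Set (ℝ × ℝ) := {p : ℝ × ℝ | 0 ≤ p.1 ∧ 0 ≤ p.2 ∧ p.1 + p.2 ≤ 1}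

/-- The contraction `f₁(p) = p/2`. -/
noncomputable def f1 (p : ℝ × ℝ) : ℝ × ℝ := (p.1 / 2, p.2 / 2)

/-- The contraction `f₂(p) = p/2 + (1/2, 0)`. -/
noncomputable def f2 (p : ℝ × ℝ) : ℝ × ℝ := (p.1 / 2 + 1 / 2, p.2 / 2)

/-- The contraction `f₃(p) = p/2 + (0, 1/2)`. -/
noncomputable def f3 (p : ℝ × ℝ) : ℝ × ℝ := (p.1 / 2, p.2 / 2 + 1 / 2)

/-- The approximations `Gₙ` to the Sierpinski gasket: `G₀ = E` and
`G_{n+1} = f₁(Gₙ) ∪ f₂(Gₙ) ∪ f₃(Gₙ)`. -/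
noncomputable def G : ℕ → Set (ℝ × ℝ)
  | 0 => E
  | n + 1 => f1 '' G n ∪ f2 '' G n ∪ f3 '' G n

namespace SierpinskiSlice

open ENNReal

/-! ### Basic properties of `E` and `G` -/

lemma E_isClosed : IsClosed E := by
  have : E = {p : ℝ × ℝ | 0 ≤ p.1} ∩ ({p | 0 ≤ p.2} ∩ {p | p.1 + p.2 ≤ 1}) := by
    ext p; simp [E, and_assoc]
  rw [this]
  exact (isClosed_le continuous_const continuous_fst).inter
    ((isClosed_le continuous_const continuous_snd).inter
      (isClosed_le (continuous_fst.add continuous_snd) continuous_const))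

lemma E_isCompact : IsCompact E := by
  refine IsCompact.of_isClosed_subset
    (isCompact_Icc (a := ((0:ℝ),(0:ℝ))) (b := (1,1))) E_isClosed ?_
  rintro p ⟨h1, h2, h3⟩
  exact ⟨⟨h1, h2⟩, ⟨by dsimp; linarith, by dsimp; linarith⟩⟩

lemma f1_cont : Continuous f1 := by unfold f1; fun_prop
lemma f2_cont : Continuous f2 := by unfold f2; fun_prop
lemma f3_cont : Continuous f3 := by unfold f3; fun_prop

lemma G_succ_subset : ∀ n, G (n+1) ⊆ G n := by
  intro n
  induction n with
  | zero =>
    show f1 '' G 0 ∪ f2 '' G 0 ∪ f3 '' G 0 ⊆ E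
    rintro p (⟨⟨q, hq, rfl⟩ | ⟨q, hq, rfl⟩⟩ | ⟨q, hq, rfl⟩) <;>
      obtain ⟨h1, h2, h3⟩ := hq <;>
      exact ⟨by dsimp [f1, f2, f3]; linarith, by dsimp [f1, f2, f3]; linarith,
        by dsimp [f1, f2, f3]; linarith⟩
  | succ n ih =>
    show f1 '' G (n+1) ∪ f2 '' G (n+1) ∪ f3 '' G (n+1) ⊆ f1 '' G n ∪ f2 '' G n ∪ f3 '' G n
    exact Set.union_subset_union (Set.union_subset_union (Set.image_mono ih) (Set.image_mono ih))
      (Set.image_mono ih)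

lemma G_antitone : Antitone G := antitone_nat_of_succ_le G_succ_subset

lemma G_subset_E (n : ℕ) : G n ⊆ E := G_antitone (Nat.zero_le n)

lemma G_isCompact (n : ℕ) : IsCompact (G n) := by
  induction n with
  | zero => exact E_isCompact
  | succ n ih =>
    show IsCompact (f1 '' G n ∪ f2 '' G n ∪ f3 '' G n)
    exact ((ih.image f1_cont).union (ih.image f2_cont)).union (ih.image f3_cont)

/-! ### Slices of `G n` along lines of slope `γ` -/

noncomputable def lineSet (γ c : ℝ) (n : ℕ) : Set ℝ := {t | (t, γ * t + c) ∈ G n}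

noncomputable def lm (γ c : ℝ) (n : ℕ) : ℝ≥0∞ := volume (lineSet γ c n)

noncomputable def lR (γ c : ℝ) : ℝ≥0∞ := ⨅ n, lm γ c n

lemma lineSet_antitone (γ c : ℝ) : Antitone (lineSet γ c) := by
  intro n m h t ht
  exact G_antitone h ht

lemma lineSet_zero_subset (γ c : ℝ) : lineSet γ c 0 ⊆ Set.Icc 0 1 := by
  intro t ht
  obtain ⟨h1, h2, h3⟩ : (0:ℝ) ≤ t ∧ 0 ≤ γ * t + c ∧ t + (γ * t + c) ≤ 1 := ht
  exact ⟨h1, by linarith⟩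

lemma lm_le_one (γ c : ℝ) (n : ℕ) : lm γ c n ≤ 1 := by
  have h : lineSet γ c n ⊆ Set.Icc 0 1 :=
    (lineSet_antitone γ c (Nat.zero_le n)).trans (lineSet_zero_subset γ c)
  calc lm γ c n ≤ volume (Set.Icc (0:ℝ) 1) := measure_mono h
    _ = 1 := by simp

lemma lm_antitone (γ c : ℝ) : Antitone (lm γ c) :=
  fun _ _ h => measure_mono (lineSet_antitone γ c h)

lemma lR_le_lm (γ c : ℝ) (n : ℕ) : lR γ c ≤ lm γ c n := iInf_le _ n

lemma lR_le_one (γ c : ℝ) : lR γ c ≤ 1 := (lR_le_lm γ c 0).trans (lm_le_one γ c 0)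

lemma c_range {γ c : ℝ} (hγ : 0 < γ) (h : (lineSet γ c 0).Nonempty) :
    c ∈ Set.Icc (-γ) 1 := by
  obtain ⟨t, ht⟩ := h
  obtain ⟨h1, h2, h3⟩ : (0:ℝ) ≤ t ∧ 0 ≤ γ * t + c ∧ t + (γ * t + c) ≤ 1 := ht
  have ht1 : t ≤ 1 := by linarith
  have hγt : 0 ≤ γ * t := mul_nonneg hγ.le h1
  have hγt1 : γ * t ≤ γ := by nlinarith
  exact ⟨by linarith, by linarith⟩

lemma lR_mem_Icc {γ c : ℝ} (hγ : 0 < γ) (h : lR γ c ≠ 0) : c ∈ Set.Icc (-γ) 1 := by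
  have hm : lm γ c 0 ≠ 0 := fun h0 => h (le_antisymm (h0 ▸ lR_le_lm γ c 0) zero_le)
  exact c_range hγ (nonempty_of_measure_ne_zero hm)

/-! ### Scaling lemmas for Lebesgue measure -/

lemma vol_preimage_two_mul (S : Set ℝ) :
    volume ((fun t : ℝ => 2 * t) ⁻¹' S) = volume S / 2 := by
  have h := Real.volume_preimage_mul_left (a := (2:ℝ)) (by norm_num) S
  have h2 : ENNReal.ofReal |(2:ℝ)⁻¹| = 2⁻¹ := by
    rw [abs_of_pos (by norm_num), ENNReal.ofReal_inv_of_pos (by norm_num)]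
    norm_num
  rw [show (fun t : ℝ => 2 * t) = (2 * ·) from rfl, h, h2, ENNReal.div_eq_inv_mul]

lemma vol_preimage_two_mul_sub (S : Set ℝ) :
    volume ((fun t : ℝ => 2 * t - 1) ⁻¹' S) = volume S / 2 := by
  have hc : (fun t : ℝ => 2 * t - 1) = (fun x : ℝ => (-1) + x) ∘ (fun t : ℝ => 2 * t) := by
    funext t; simp; ring
  rw [hc, Set.preimage_comp, vol_preimage_two_mul, measure_preimage_add volume (-1 : ℝ) S]

/-! ### The three sub-slices -/

lemma slice1 (γ c : ℝ) (n : ℕ) :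
    {t : ℝ | (t, γ * t + c) ∈ f1 '' G n} ⊆
      (fun t : ℝ => 2 * t) ⁻¹' lineSet γ (2 * c) n := by
  rintro t ⟨q, hq, hfq⟩
  have h1 : q.1 / 2 = t := congrArg Prod.fst hfq
  have h2 : q.2 / 2 = γ * t + c := congrArg Prod.snd hfq
  have hqe : q = (2 * t, γ * (2 * t) + 2 * c) := by
    apply Prod.ext <;> dsimp <;> linarith
  simpa [Set.mem_preimage, lineSet] using hqe ▸ hq

lemma slice2 (γ c : ℝ) (n : ℕ) :
    {t : ℝ | (t, γ * t + c) ∈ f2 '' G n} ⊆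
      (fun t : ℝ => 2 * t - 1) ⁻¹' lineSet γ (2 * c + γ) n := by
  rintro t ⟨q, hq, hfq⟩
  have h1 : q.1 / 2 + 1 / 2 = t := congrArg Prod.fst hfq
  have h2 : q.2 / 2 = γ * t + c := congrArg Prod.snd hfq
  have hqe : q = (2 * t - 1, γ * (2 * t - 1) + (2 * c + γ)) := by
    apply Prod.ext <;> dsimp <;> linarith
  simpa [Set.mem_preimage, lineSet] using hqe ▸ hq

lemma slice3 (γ c : ℝ) (n : ℕ) :
    {t : ℝ | (t, γ * t + c) ∈ f3 '' G n} ⊆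
      (fun t : ℝ => 2 * t) ⁻¹' lineSet γ (2 * c - 1) n := by
  rintro t ⟨q, hq, hfq⟩
  have h1 : q.1 / 2 = t := congrArg Prod.fst hfq
  have h2 : q.2 / 2 + 1 / 2 = γ * t + c := congrArg Prod.snd hfq
  have hqe : q = (2 * t, γ * (2 * t) + (2 * c - 1)) := by
    apply Prod.ext <;> dsimp <;> linarith
  simpa [Set.mem_preimage, lineSet] using hqe ▸ hq

/-- A line of positive slope cannot cross both the right triangle `f2(E)` and the top
triangle `f3(E)` except at the single point with `t = 1/2`. -/
lemma exclusive {γ c t₂ t₃ : ℝ} (hγ : 0 < γ)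
    (h2 : (t₂, γ * t₂ + c) ∈ f2 '' E) (h3 : (t₃, γ * t₃ + c) ∈ f3 '' E) :
    t₂ = 1 / 2 ∧ t₃ = 1 / 2 := by
  obtain ⟨p, hp, hfp⟩ := h2
  obtain ⟨q, hq, hfq⟩ := h3
  obtain ⟨hp1, hp2, hp3⟩ := hp
  obtain ⟨hq1, hq2, hq3⟩ := hq
  have e1 : p.1 / 2 + 1 / 2 = t₂ := congrArg Prod.fst hfp
  have e2 : p.2 / 2 = γ * t₂ + c := congrArg Prod.snd hfp
  have e3 : q.1 / 2 = t₃ := congrArg Prod.fst hfq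
  have e4 : q.2 / 2 + 1 / 2 = γ * t₃ + c := congrArg Prod.snd hfq
  have k1 : 1 / 2 ≤ t₂ := by linarith
  have k2 : γ * t₂ + c ≤ 1 / 2 := by linarith
  have k3 : 1 / 2 ≤ γ * t₃ + c := by linarith
  have k4 : t₃ ≤ 1 / 2 := by linarith
  have k5 : γ * t₂ ≤ γ * t₃ := by linarith
  have k6 : t₂ ≤ t₃ := (mul_le_mul_iff_right₀ hγ).mp k5
  constructor <;> linarith

/-! ### The key recursive inequality -/

lemma lm_succ_le {γ : ℝ} (hγ : 0 < γ) (c : ℝ) (n : ℕ) :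
    lm γ c (n+1) ≤ lm γ (2*c) n / 2 + (lm γ (2*c+γ) n ⊔ lm γ (2*c-1) n) / 2 := by
  set S1 : Set ℝ := {t : ℝ | (t, γ * t + c) ∈ f1 '' G n} with hS1
  set S2 : Set ℝ := {t : ℝ | (t, γ * t + c) ∈ f2 '' G n} with hS2
  set S3 : Set ℝ := {t : ℝ | (t, γ * t + c) ∈ f3 '' G n} with hS3
  have hsplit : lineSet γ c (n+1) = S1 ∪ (S2 ∪ S3) := by
    ext t
    show (t, γ * t + c) ∈ f1 '' G n ∪ f2 '' G n ∪ f3 '' G n ↔ _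
    simp only [Set.mem_union, Set.mem_setOf_eq, hS1, hS2, hS3, or_assoc]
  have hv1 : volume S1 ≤ lm γ (2*c) n / 2 := by
    calc volume S1 ≤ volume ((fun t : ℝ => 2 * t) ⁻¹' lineSet γ (2 * c) n) :=
          measure_mono (slice1 γ c n)
      _ = lm γ (2*c) n / 2 := vol_preimage_two_mul _
  have hv2 : volume S2 ≤ lm γ (2*c+γ) n / 2 := by
    calc volume S2 ≤ volume ((fun t : ℝ => 2 * t - 1) ⁻¹' lineSet γ (2 * c + γ) n) :=
          measure_mono (slice2 γ c n)
      _ = lm γ (2*c+γ) n / 2 := vol_preimage_two_mul_sub _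
  have hv3 : volume S3 ≤ lm γ (2*c-1) n / 2 := by
    calc volume S3 ≤ volume ((fun t : ℝ => 2 * t) ⁻¹' lineSet γ (2 * c - 1) n) :=
          measure_mono (slice3 γ c n)
      _ = lm γ (2*c-1) n / 2 := vol_preimage_two_mul _
  have hS2E : S2 ⊆ {t : ℝ | (t, γ * t + c) ∈ f2 '' E} :=
    fun t ht => Set.image_mono (G_subset_E n) ht
  have hS3E : S3 ⊆ {t : ℝ | (t, γ * t + c) ∈ f3 '' E} :=
    fun t ht => Set.image_mono (G_subset_E n) ht
  have hv23 : volume (S2 ∪ S3) ≤ (lm γ (2*c+γ) n ⊔ lm γ (2*c-1) n) / 2 := by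
    by_cases hcase : ∃ t ∈ S2, t ≠ 1/2
    · obtain ⟨t₂, ht₂, ht₂ne⟩ := hcase
      have hS3empty : S3 = ∅ := by
        rw [Set.eq_empty_iff_forall_notMem]
        intro t₃ ht₃
        exact ht₂ne (exclusive hγ (hS2E ht₂) (hS3E ht₃)).1
      calc volume (S2 ∪ S3) = volume S2 := by rw [hS3empty, Set.union_empty]
        _ ≤ lm γ (2*c+γ) n / 2 := hv2
        _ ≤ _ := ENNReal.div_le_div_right le_sup_left 2
    · push_neg at hcase
      have hS2sub : S2 ⊆ {(1:ℝ)/2} := fun t ht => hcase t ht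
      have hvS2 : volume S2 = 0 := by
        refine le_antisymm ?_ zero_le
        calc volume S2 ≤ volume {(1:ℝ)/2} := measure_mono hS2sub
          _ = 0 := Real.volume_singleton
      calc volume (S2 ∪ S3) ≤ volume S2 + volume S3 := measure_union_le _ _
        _ = volume S3 := by rw [hvS2, zero_add]
        _ ≤ lm γ (2*c-1) n / 2 := hv3
        _ ≤ _ := ENNReal.div_le_div_right le_sup_right 2
  calc lm γ c (n+1) = volume (S1 ∪ (S2 ∪ S3)) := by rw [lm, hsplit]
    _ ≤ volume S1 + volume (S2 ∪ S3) := measure_union_le _ _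
    _ ≤ lm γ (2*c) n / 2 + (lm γ (2*c+γ) n ⊔ lm γ (2*c-1) n) / 2 := add_le_add hv1 hv23

lemma lm_approx (γ c : ℝ) {ε : ℝ≥0∞} (hε : 0 < ε) : ∃ n, lm γ c n ≤ lR γ c + ε := by
  have h : lR γ c < lR γ c + ε :=
    ENNReal.lt_add_right (lt_of_le_of_lt (lR_le_one γ c) one_lt_top).ne hε.ne'
  obtain ⟨n, hn⟩ := iInf_lt_iff.mp h
  exact ⟨n, hn.le⟩

lemma lR_key {γ : ℝ} (hγ : 0 < γ) (c : ℝ) :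
    lR γ c ≤ lR γ (2*c) / 2 + (lR γ (2*c+γ) ⊔ lR γ (2*c-1)) / 2 := by
  refine ENNReal.le_of_forall_pos_le_add fun ε hε _ => ?_
  have hε' : (0:ℝ≥0∞) < ε := by exact_mod_cast hε
  obtain ⟨n₁, h₁⟩ := lm_approx γ (2*c) hε'
  obtain ⟨n₂, h₂⟩ := lm_approx γ (2*c+γ) hε'
  obtain ⟨n₃, h₃⟩ := lm_approx γ (2*c-1) hε'
  set n := max n₁ (max n₂ n₃) with hn
  have e₁ : lm γ (2*c) n ≤ lR γ (2*c) + ε :=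
    (lm_antitone γ (2*c) (le_max_left _ _)).trans h₁
  have e₂ : lm γ (2*c+γ) n ≤ lR γ (2*c+γ) + ε :=
    (lm_antitone γ (2*c+γ) ((le_max_left _ _).trans (le_max_right _ _))).trans h₂
  have e₃ : lm γ (2*c-1) n ≤ lR γ (2*c-1) + ε :=
    (lm_antitone γ (2*c-1) ((le_max_right _ _).trans (le_max_right _ _))).trans h₃
  calc lR γ c ≤ lm γ c (n+1) := lR_le_lm γ c (n+1)
    _ ≤ lm γ (2*c) n / 2 + (lm γ (2*c+γ) n ⊔ lm γ (2*c-1) n) / 2 := lm_succ_le hγ c n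
    _ ≤ (lR γ (2*c) + ε) / 2 + ((lR γ (2*c+γ) + ε) ⊔ (lR γ (2*c-1) + ε)) / 2 := by
        gcongr
    _ = (lR γ (2*c) + ε) / 2 + ((lR γ (2*c+γ) ⊔ lR γ (2*c-1)) + ε) / 2 := by
        rw [max_add_add_right]
    _ = lR γ (2*c) / 2 + (lR γ (2*c+γ) ⊔ lR γ (2*c-1)) / 2 + ((ε:ℝ≥0∞)/2 + ε/2) := by
        rw [ENNReal.add_div, ENNReal.add_div, add_add_add_comm]
    _ = lR γ (2*c) / 2 + (lR γ (2*c+γ) ⊔ lR γ (2*c-1)) / 2 + ε := by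
        rw [ENNReal.add_halves]

/-! ### Upper semicontinuity and attainment of the supremum -/

lemma usc_aux (γ : ℝ) {K : Set (ℝ × ℝ)} (hK : IsCompact K) (c : ℝ) (y : ℝ≥0∞)
    (h : volume {t : ℝ | (t, γ * t + c) ∈ K} < y) :
    ∀ᶠ c' in nhds c, volume {t : ℝ | (t, γ * t + c') ∈ K} < y := by
  set K' : Set (ℝ × ℝ) := (fun p : ℝ × ℝ => (p.1, γ * p.1 + p.2)) ⁻¹' K with hK'def
  have hK'cpt : IsCompact K' := by
    have himg : K' = (fun q : ℝ × ℝ => (q.1, q.2 - γ * q.1)) '' K := by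
      ext p
      constructor
      · intro hp
        exact ⟨(p.1, γ * p.1 + p.2), hp, by simp⟩
      · rintro ⟨q, hq, rfl⟩
        simpa [hK'def, Set.mem_preimage] using hq
    rw [himg]
    exact hK.image (by fun_prop)
  obtain ⟨U, hAU, hUopen, hUvol⟩ :=
    Set.exists_isOpen_lt_of_lt {t : ℝ | (t, γ * t + c) ∈ K} y h
  set C : Set (ℝ × ℝ) := K' ∩ (Uᶜ ×ˢ (Set.univ : Set ℝ)) with hCdef
  have hCcpt : IsCompact C :=
    hK'cpt.inter_right ((hUopen.isClosed_compl).prod isClosed_univ)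
  set D : Set ℝ := Prod.snd '' C with hDdef
  have hDclosed : IsClosed D := (hCcpt.image continuous_snd).isClosed
  have hcD : c ∉ D := by
    rintro ⟨p, ⟨hpK', hpU⟩, hp2⟩
    have hmem : p.1 ∈ {t : ℝ | (t, γ * t + c) ∈ K} := by
      have : (p.1, γ * p.1 + p.2) ∈ K := hpK'
      rwa [show p.2 = c from hp2] at this
    exact hpU.1 (hAU hmem)
  filter_upwards [hDclosed.isOpen_compl.mem_nhds hcD] with c' hc'
  have hsub : {t : ℝ | (t, γ * t + c') ∈ K} ⊆ U := by
    intro t ht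
    by_contra htU
    exact hc' ⟨(t, c'), ⟨ht, htU, Set.mem_univ _⟩, rfl⟩
  exact lt_of_le_of_lt (measure_mono hsub) hUvol

lemma lR_lt_isOpen (γ : ℝ) (y : ℝ≥0∞) : IsOpen {c : ℝ | lR γ c < y} := by
  rw [isOpen_iff_mem_nhds]
  intro c hc
  obtain ⟨n, hn⟩ := iInf_lt_iff.mp (show (⨅ n, lm γ c n) < y from hc)
  have h := usc_aux γ (G_isCompact n) c y hn
  filter_upwards [h] with c' h'
  exact lt_of_le_of_lt (lR_le_lm γ c' n) h'

lemma exists_max {γ : ℝ} (hγ : 0 < γ) (hs : (⨆ c, lR γ c) ≠ 0) :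
    ∃ c₀, lR γ c₀ = ⨆ c, lR γ c := by
  set s := ⨆ c, lR γ c with hsdef
  have hstop : s ≠ ⊤ := ((iSup_le fun c => lR_le_one γ c).trans_lt one_lt_top).ne
  set CC : ℕ → Set ℝ := fun k => {c | c ∈ Set.Icc (-γ) 1 ∧ s - (↑(k+1))⁻¹ ≤ lR γ c} with hCC
  have hclosed : ∀ k, IsClosed (CC k) := by
    intro k
    have : CC k = Set.Icc (-γ) 1 ∩ {c | lR γ c < s - (↑(k+1))⁻¹}ᶜ := by
      ext c; simp [hCC, not_lt]
    rw [this]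
    exact isClosed_Icc.inter (lR_lt_isOpen γ _).isClosed_compl
  have hne : ∀ k, (CC k).Nonempty := by
    intro k
    by_cases h0 : s - ((↑(k+1):ℝ≥0∞))⁻¹ = 0
    · exact ⟨0, ⟨neg_nonpos.mpr hγ.le, zero_le_one⟩, by rw [h0]; exact zero_le⟩
    · have hlt : s - ((↑(k+1):ℝ≥0∞))⁻¹ < s :=
        ENNReal.sub_lt_self hstop hs (ENNReal.inv_ne_zero.mpr (ENNReal.natCast_ne_top _))
      obtain ⟨c, hc⟩ := lt_iSup_iff.mp hlt
      have hRne : lR γ c ≠ 0 := by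
        intro hzero
        rw [hzero] at hc
        exact (not_lt_of_ge zero_le) hc
      exact ⟨c, lR_mem_Icc hγ hRne, hc.le⟩
  have hdec : ∀ k, CC (k+1) ⊆ CC k := by
    intro k c hcmem
    refine ⟨hcmem.1, le_trans ?_ hcmem.2⟩
    refine tsub_le_tsub_left ?_ s
    exact ENNReal.inv_le_inv' (by exact_mod_cast Nat.le_succ (k+1))
  have h0cpt : IsCompact (CC 0) :=
    IsCompact.of_isClosed_subset isCompact_Icc (hclosed 0) (fun c hc => hc.1)
  obtain ⟨c₀, hc₀⟩ := IsCompact.nonempty_iInter_of_sequence_nonempty_isCompact_isClosed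
    CC hdec hne h0cpt hclosed
  refine ⟨c₀, le_antisymm (le_iSup _ c₀) ?_⟩
  refine ENNReal.le_of_forall_pos_le_add fun ε hε _ => ?_
  have hεne : ((ε:ℝ≥0∞)) ≠ 0 := by exact_mod_cast hε.ne'
  obtain ⟨n, hn⟩ := ENNReal.exists_inv_nat_lt hεne
  have hmem : c₀ ∈ CC n := Set.mem_iInter.mp hc₀ n
  have hinv : ((↑(n+1):ℝ≥0∞))⁻¹ ≤ ε := by
    refine le_trans (ENNReal.inv_le_inv' ?_) hn.le
    exact_mod_cast Nat.le_succ n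
  calc s ≤ (s - ((↑(n+1):ℝ≥0∞))⁻¹) + ((↑(n+1):ℝ≥0∞))⁻¹ := le_tsub_add
    _ ≤ lR γ c₀ + ε := add_le_add hmem.2 hinv

/-! ### The supremum is zero -/

lemma sup_lR_eq_zero {γ : ℝ} (hγ : 0 < γ) : (⨆ c, lR γ c) = 0 := by
  by_contra hs
  set s := ⨆ c, lR γ c with hsdef
  have hstop : s ≠ ⊤ := ((iSup_le fun c => lR_le_one γ c).trans_lt one_lt_top).ne
  have hub : ∀ c, lR γ c ≤ s := fun c => le_iSup _ c
  have htwo0 : (2:ℝ≥0∞) ≠ 0 := by norm_num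
  have htwot : (2:ℝ≥0∞) ≠ ⊤ := by norm_num
  have half_le : ∀ a b : ℝ≥0∞, a / 2 ≤ b / 2 → a ≤ b := by
    intro a b hab
    have := mul_le_mul_left hab 2
    rwa [ENNReal.div_mul_cancel htwo0 htwot, ENNReal.div_mul_cancel htwo0 htwot] at this
  have hdb : ∀ c, lR γ c = s →
      lR γ (2*c) = s ∧ (lR γ (2*c+γ) = s ∨ lR γ (2*c-1) = s) := by
    intro c hc
    have hkey := lR_key hγ c
    rw [hc] at hkey
    have hM_le : lR γ (2*c+γ) ⊔ lR γ (2*c-1) ≤ s := sup_le (hub _) (hub _)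
    have ha_le : lR γ (2*c) ≤ s := hub _
    have hs2a : s / 2 ≤ lR γ (2*c) / 2 := by
      have h1 : s ≤ lR γ (2*c) / 2 + s / 2 :=
        hkey.trans (add_le_add_right (ENNReal.div_le_div_right hM_le 2) _)
      have h2 := tsub_le_iff_right.mpr h1
      rwa [ENNReal.sub_half hstop] at h2
    have hs2M : s / 2 ≤ (lR γ (2*c+γ) ⊔ lR γ (2*c-1)) / 2 := by
      have h1 : s ≤ (lR γ (2*c+γ) ⊔ lR γ (2*c-1)) / 2 + s / 2 := by
        calc s ≤ lR γ (2*c) / 2 + (lR γ (2*c+γ) ⊔ lR γ (2*c-1)) / 2 := hkey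
          _ ≤ s / 2 + (lR γ (2*c+γ) ⊔ lR γ (2*c-1)) / 2 :=
            add_le_add_left (ENNReal.div_le_div_right ha_le 2) _
          _ = (lR γ (2*c+γ) ⊔ lR γ (2*c-1)) / 2 + s / 2 := add_comm _ _
      have h2 := tsub_le_iff_right.mpr h1
      rwa [ENNReal.sub_half hstop] at h2
    have ha : lR γ (2*c) = s := le_antisymm ha_le (half_le _ _ hs2a)
    have hM : lR γ (2*c+γ) ⊔ lR γ (2*c-1) = s :=
      le_antisymm hM_le (half_le _ _ hs2M)
    refine ⟨ha, ?_⟩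
    rcases le_total (lR γ (2*c+γ)) (lR γ (2*c-1)) with hle | hle
    · right; rwa [sup_eq_right.mpr hle] at hM
    · left; rwa [sup_eq_left.mpr hle] at hM
  have hzero : ∀ c, lR γ c = s → c = 0 := by
    intro c hc
    have hpow : ∀ n : ℕ, lR γ (2^n * c) = s := by
      intro n
      induction n with
      | zero => simpa using hc
      | succ n ih =>
        have := (hdb _ ih).1
        have hrw : (2:ℝ)^(n+1) * c = 2 * (2^n * c) := by ring
        rwa [hrw]
    have hb : ∀ n : ℕ, 2^n * c ∈ Set.Icc (-γ) 1 := fun n =>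
      lR_mem_Icc hγ (by rw [hpow n]; exact hs)
    by_contra hc0
    rcases lt_or_gt_of_ne hc0 with hneg | hpos
    · obtain ⟨n, hn⟩ := pow_unbounded_of_one_lt (γ / (-c)) (one_lt_two (α := ℝ))
      have hnc : 0 < -c := neg_pos.mpr hneg
      have : γ < 2^n * (-c) := (div_lt_iff₀ hnc).mp hn
      have h1 := (hb n).1
      nlinarith
    · obtain ⟨n, hn⟩ := pow_unbounded_of_one_lt (1 / c) (one_lt_two (α := ℝ))
      have : 1 < 2^n * c := (div_lt_iff₀ hpos).mp hn
      have h2 := (hb n).2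
      linarith
  obtain ⟨c₀, hc₀⟩ := exists_max hγ hs
  have hc₀0 : c₀ = 0 := hzero c₀ hc₀
  rw [hc₀0] at hc₀
  rcases (hdb 0 hc₀).2 with h | h
  · have : 2 * (0:ℝ) + γ = 0 := hzero _ h
    linarith
  · have : 2 * (0:ℝ) - 1 = 0 := hzero _ h
    linarith

lemma lR_zero {γ : ℝ} (hγ : 0 < γ) (c : ℝ) : lR γ c = 0 :=
  le_antisymm ((le_iSup _ c).trans_eq (sup_lR_eq_zero hγ)) zero_le

end SierpinskiSlice

theorem stmt2 (γ : ℝ) (hγ : 0 < γ) :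
    Tendsto (fun n : ℕ => volume {t : ℝ | (t, γ * t) ∈ G n}) atTop (nhds 0) ∧
    volume {t : ℝ | (t, γ * t) ∈ ⋂ n : ℕ, G n} = 0 := by
  open SierpinskiSlice in
  have hset : ∀ n, {t : ℝ | (t, γ * t) ∈ G n} = SierpinskiSlice.lineSet γ 0 n := by
    intro n
    ext t
    simp [SierpinskiSlice.lineSet]
  have hR0 : SierpinskiSlice.lR γ 0 = 0 := SierpinskiSlice.lR_zero hγ 0
  constructor
  · have hfun : (fun n : ℕ => volume {t : ℝ | (t, γ * t) ∈ G n}) = SierpinskiSlice.lm γ 0 := by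
      funext n
      rw [SierpinskiSlice.lm, hset n]
    rw [hfun]
    have := tendsto_atTop_iInf (SierpinskiSlice.lm_antitone γ 0)
    rwa [show (⨅ n, SierpinskiSlice.lm γ 0 n) = 0 from hR0] at this
  · refine le_antisymm ?_ zero_le
    rw [← hR0]
    refine le_iInf fun n => ?_
    refine measure_mono fun t ht => ?_
    have : (t, γ * t) ∈ G n := Set.mem_iInter.mp ht n
    simpa [SierpinskiSlice.lineSet] using this
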